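/- Let D be a principal ideal domain, p ∈ D a prime element, ℓ ≥ 0, A an n×n matrix over D, and let ν_i ∈ D[X] be (p^i)-minimal polynomials of A for 0 ≤ i ≤ ℓ (with ν_0 = 1). Then N_{(p^ℓ)}(A) = Σ_{i ∈ I_A^ℓ} p^{ℓ-i}·ν_i·D[X], where I_A^ℓ is the ℓ-th index set of A with respect to p. -/
import Mathlib


/-- `f(A) ∈ d·M_n(D)`, i.e. `f` belongs to the `(d)`-ideal `N_{(d)}(A)` of the matrix `A`. -/
def memNullDvd {D : Type*} [CommRing D] {n : ℕ} (A : Matrix (Fin n) (Fin n) D) (d : D)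
    (f : Polynomial D) : Prop :=
  ∃ B : Matrix (Fin n) (Fin n) D, Polynomial.aeval A f = d • B

/-- `f` is a `(d)`-minimal polynomial of `A`: a monic polynomial in `N_{(d)}(A)` of minimal
degree among monic polynomials in `N_{(d)}(A)`. -/
def IsMinPolyMod {D : Type*} [CommRing D] {n : ℕ} (A : Matrix (Fin n) (Fin n) D) (d : D)
    (f : Polynomial D) : Prop :=
  f.Monic ∧ memNullDvd A d f ∧
    ∀ g : Polynomial D, g.Monic → memNullDvd A d g → f.degree ≤ g.degree

/-- The `ℓ`-th index set of `A` with respect to `p`, computed from a choice `ν` of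
`(p^i)`-minimal polynomials: `I_A^ℓ = {ℓ} ∪ {i : 0 ≤ i < ℓ, deg ν_i < deg ν_{i+1}}`. -/
def indexSet {D : Type*} [CommRing D] (ν : ℕ → Polynomial D) (ℓ : ℕ) : Finset ℕ :=
  insert ℓ ((Finset.range ℓ).filter fun i => (ν i).natDegree < (ν (i + 1)).natDegree)

open Polynomial

section Helpers

variable {D : Type*} [CommRing D] {n : ℕ} (A : Matrix (Fin n) (Fin n) D)

lemma aeval_C_mul' (c : D) (f : Polynomial D) :
    Polynomial.aeval A (Polynomial.C c * f) = c • Polynomial.aeval A f := by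
  rw [map_mul, Polynomial.aeval_C, ← Algebra.smul_def]

lemma mnd_zero (d : D) : memNullDvd A d 0 := ⟨0, by simp⟩

lemma mnd_add {d : D} {f g : Polynomial D} (hf : memNullDvd A d f) (hg : memNullDvd A d g) :
    memNullDvd A d (f + g) := by
  obtain ⟨B, hB⟩ := hf; obtain ⟨C, hC⟩ := hg
  exact ⟨B + C, by rw [map_add, hB, hC, smul_add]⟩

lemma mnd_sub {d : D} {f g : Polynomial D} (hf : memNullDvd A d f) (hg : memNullDvd A d g) :
    memNullDvd A d (f - g) := by
  obtain ⟨B, hB⟩ := hf; obtain ⟨C, hC⟩ := hg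
  exact ⟨B - C, by rw [map_sub, hB, hC, smul_sub]⟩

lemma mnd_mul_left (g : Polynomial D) {d : D} {f : Polynomial D} (hf : memNullDvd A d f) :
    memNullDvd A d (g * f) := by
  obtain ⟨B, hB⟩ := hf
  exact ⟨Polynomial.aeval A g * B, by rw [map_mul, hB, mul_smul_comm]⟩

lemma mnd_mul_right (g : Polynomial D) {d : D} {f : Polynomial D} (hf : memNullDvd A d f) :
    memNullDvd A d (f * g) := by
  obtain ⟨B, hB⟩ := hf
  exact ⟨B * Polynomial.aeval A g, by rw [map_mul, hB, smul_mul_assoc]⟩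

/-- scaling by a constant, changing the level. -/
lemma mnd_scale {d e c r : D} (h : c * d = e * r) {f : Polynomial D}
    (hf : memNullDvd A d f) : memNullDvd A e (Polynomial.C c * f) := by
  obtain ⟨B, hB⟩ := hf
  exact ⟨r • B, by rw [aeval_C_mul', hB, smul_smul, h, mul_smul]⟩

lemma mnd_pow_le {p : D} {a b : ℕ} (h : a ≤ b) {f : Polynomial D}
    (hf : memNullDvd A (p ^ b) f) : memNullDvd A (p ^ a) f := by
  obtain ⟨B, hB⟩ := hf
  refine ⟨p ^ (b - a) • B, ?_⟩
  rw [hB, smul_smul, ← pow_add]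
  congr 2
  omega

lemma mnd_cancel [IsDomain D] {c d : D} (hc : c ≠ 0) {f : Polynomial D}
    (h : memNullDvd A (c * d) (Polynomial.C c * f)) : memNullDvd A d f := by
  obtain ⟨B, hB⟩ := h
  rw [aeval_C_mul', mul_smul] at hB
  refine ⟨B, ?_⟩
  funext i j
  have := congrArg (fun M => M i j) hB
  simp only [Matrix.smul_apply, smul_eq_mul] at this ⊢
  exact mul_left_cancel₀ hc this

lemma natDegree_lt_of_coeff_eq_zero {f : Polynomial D} {k : ℕ} (hne : f ≠ 0)
    (hle : f.natDegree ≤ k) (hc : f.coeff k = 0) : f.natDegree < k := by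
  rcases lt_or_eq_of_le hle with h | h
  · exact h
  · exfalso
    apply hne
    rw [← Polynomial.leadingCoeff_eq_zero, Polynomial.leadingCoeff, h, hc]

end Helpers

section Main

variable {D : Type*} [CommRing D] [IsDomain D] [IsPrincipalIdealRing D]
  {p : D} (hp : Prime p) {n : ℕ} (A : Matrix (Fin n) (Fin n) D)

include hp

/-- If `g ∈ N_{(p^m)}(A)` is nonzero of degree less than the degree of a `(p^m)`-minimal
polynomial `w`, then `p` divides the leading coefficient of `g`. -/
lemma lemB {m : ℕ} {w : Polynomial D} (hw : IsMinPolyMod A (p ^ m) w)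
    {g : Polynomial D} (hg : memNullDvd A (p ^ m) g) (_hgne : g ≠ 0)
    (hdeg : g.natDegree < w.natDegree) : p ∣ g.leadingCoeff := by
  by_contra hpu
  set k := g.natDegree with hk
  set u := g.leadingCoeff with hu
  have hcop : IsCoprime (p ^ m) u := ((hp.coprime_iff_not_dvd).2 hpu).pow_left
  obtain ⟨a, b, hab⟩ := hcop
  -- h := C b * g + C (a * p ^ m) * X ^ k is monic of degree k and lies in N_{(p^m)}
  set h : Polynomial D := Polynomial.C b * g + Polynomial.C (a * p ^ m) * Polynomial.X ^ k
    with hh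
  have hcoeff : h.coeff k = 1 := by
    have hgk : g.coeff k = u := rfl
    rw [hh]
    simp only [Polynomial.coeff_add, Polynomial.coeff_C_mul, Polynomial.coeff_X_pow,
      if_pos rfl, if_true, mul_one, hgk]
    linear_combination hab
  have hdle : h.natDegree ≤ k := by
    apply le_trans (Polynomial.natDegree_add_le _ _)
    apply max_le
    · exact le_trans (Polynomial.natDegree_C_mul_le _ _) le_rfl
    · exact le_trans (Polynomial.natDegree_C_mul_le _ _) (le_of_eq (Polynomial.natDegree_X_pow _))
  have hdeq : h.natDegree = k := by
    refine le_antisymm hdle (Polynomial.le_natDegree_of_ne_zero ?_)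
    rw [hcoeff]; exact one_ne_zero
  have hmonic : h.Monic := by
    rw [Polynomial.Monic, Polynomial.leadingCoeff, hdeq, hcoeff]
  have hmem : memNullDvd A (p ^ m) h := by
    apply mnd_add
    · exact mnd_mul_left A _ hg
    · refine ⟨a • (A ^ k), ?_⟩
      rw [aeval_C_mul', map_pow, Polynomial.aeval_X, smul_smul, mul_comm a (p ^ m)]
  have := Polynomial.natDegree_le_natDegree (hw.2.2 h hmonic hmem)
  rw [hdeq] at this
  omega

variable {ℓ : ℕ} {ν : ℕ → Polynomial D} (hν0 : ν 0 = 1)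
  (hν : ∀ i, i ≤ ℓ → IsMinPolyMod A (p ^ i) (ν i))

include hp hν0 hν

/-- Key divisibility lemma: if `g ∈ N_{(p^L)}(A)` and `i ≤ L` is such that either `i = L` or
`deg g < deg ν_{i+1}`, then `p^{L-i}` divides `g` coefficientwise. -/
lemma keyS : ∀ (t L : ℕ) (g : Polynomial D) (i : ℕ), L + g.natDegree + i ≤ t → L ≤ ℓ →
    i ≤ L → memNullDvd A (p ^ L) g →
    (i = L ∨ g.natDegree < (ν (i + 1)).natDegree) →
    Polynomial.C (p ^ (L - i)) ∣ g := by
  intro t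
  induction t using Nat.strong_induction_on with
  | _ t IH =>
    intro L g i hle hLl hiL hmem hcond
    rcases eq_or_ne i L with rfl | hiLne
    · simp only [Nat.sub_self, pow_zero, map_one]
      exact one_dvd g
    have hiltL : i < L := lt_of_le_of_ne hiL hiLne
    have hklt : g.natDegree < (ν (i + 1)).natDegree := by
      rcases hcond with h | h
      · exact absurd h hiLne
      · exact h
    rcases eq_or_ne g 0 with rfl | hgne
    · exact dvd_zero _
    set k := g.natDegree with hk
    by_cases hd : (ν i).natDegree ≤ k
    · -- main branch
      set c := L - 1 - i with hc
      have hc1 : c + 1 = L - i := by omega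
      -- descent to level L - 1
      have hdvd1 : Polynomial.C (p ^ c) ∣ g := by
        have := IH (L - 1 + g.natDegree + i) (by omega) (L - 1) g i le_rfl (by omega)
          (by omega) (mnd_pow_le A (by omega) hmem) (Or.inr hklt)
        simpa only [show L - 1 - i = c from rfl] using this
      obtain ⟨g₀, hg₀⟩ := hdvd1
      have hpc : (p : D) ^ c ≠ 0 := pow_ne_zero _ hp.ne_zero
      have hg₀ne : g₀ ≠ 0 := by rintro rfl; rw [mul_zero] at hg₀; exact hgne hg₀
      have hCne : (Polynomial.C (p ^ c) : Polynomial D) ≠ 0 := by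
        simpa using hpc
      have hdeg₀ : g₀.natDegree = k := by
        rw [hk, hg₀, Polynomial.natDegree_mul hCne hg₀ne, Polynomial.natDegree_C, zero_add]
      have hmem₀ : memNullDvd A (p ^ (i + 1)) g₀ := by
        apply mnd_cancel A hpc
        have : (p : D) ^ c * p ^ (i + 1) = p ^ L := by rw [← pow_add]; congr 1; omega
        rw [this, ← hg₀]
        exact hmem
      -- p divides the leading coefficient of g₀
      have hplead : p ∣ g₀.coeff k := by
        have := lemB hp A (hν (i + 1) (by omega)) hmem₀ hg₀ne (by omega)
        rwa [Polynomial.leadingCoeff, hdeg₀] at this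
      obtain ⟨b, hb⟩ := hplead
      set d := (ν i).natDegree with hdd
      set μ : Polynomial D := Polynomial.X ^ (k - d) * ν i with hμ
      have hνimonic : (ν i).Monic := (hν i (by omega)).1
      have hμmonic : μ.Monic := (Polynomial.monic_X_pow _).mul hνimonic
      have hμdeg : μ.natDegree = k := by
        rw [hμ, (Polynomial.monic_X_pow _).natDegree_mul hνimonic,
          Polynomial.natDegree_X_pow]
        omega
      have hμmem : memNullDvd A (p ^ i) μ := mnd_mul_left A _ (hν i (by omega)).2.1
      set g₀' : Polynomial D := g₀ - Polynomial.C (p * b) * μ with hg₀'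
      have hmem₀' : memNullDvd A (p ^ (i + 1)) g₀' := by
        apply mnd_sub A hmem₀
        exact mnd_scale A (show (p * b) * p ^ i = p ^ (i + 1) * b by rw [pow_succ]; ring) hμmem
      have hcoeff₀' : g₀'.coeff k = 0 := by
        rw [hg₀', Polynomial.coeff_sub, Polynomial.coeff_C_mul, hb,
          show μ.coeff k = 1 by rw [← hμdeg]; exact hμmonic.coeff_natDegree, mul_one, sub_self]
      have hdeg₀' : g₀'.natDegree ≤ k := by
        apply le_trans (Polynomial.natDegree_sub_le _ _)
        apply max_le (le_of_eq hdeg₀)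
        exact le_trans (Polynomial.natDegree_C_mul_le _ _) (le_of_eq hμdeg)
      set g' : Polynomial D := Polynomial.C (p ^ c) * g₀' with hg'
      have hCC : Polynomial.C (p ^ (L - i)) * Polynomial.C b
          = Polynomial.C (p ^ c) * Polynomial.C (p * b) := by
        rw [← Polynomial.C_mul, ← Polynomial.C_mul]
        congr 1
        rw [← hc1, pow_succ]
        ring
      have hsplit : g = g' + Polynomial.C (p ^ (L - i)) * Polynomial.C b * μ := by
        calc g = Polynomial.C (p ^ c) * g₀ := hg₀
        _ = Polynomial.C (p ^ c) * g₀'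
            + Polynomial.C (p ^ c) * Polynomial.C (p * b) * μ := by rw [hg₀']; ring
        _ = g' + Polynomial.C (p ^ (L - i)) * Polynomial.C b * μ := by rw [hg', hCC]
      have hdvdg' : Polynomial.C (p ^ (L - i)) ∣ g' := by
        rcases eq_or_ne g₀' 0 with h0 | h0
        · rw [hg', h0, mul_zero]; exact dvd_zero _
        · have hg'ne : g' ≠ 0 := by
            rw [hg']
            exact mul_ne_zero hCne h0
          have hdg' : g'.natDegree < k := by
            apply natDegree_lt_of_coeff_eq_zero hg'ne
            · exact le_trans (Polynomial.natDegree_C_mul_le _ _) hdeg₀'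
            · rw [hg', Polynomial.coeff_C_mul, hcoeff₀', mul_zero]
          have hmem' : memNullDvd A (p ^ L) g' := by
            rw [hg']
            exact mnd_scale A
              (show (p : D) ^ c * p ^ (i + 1) = p ^ L * 1 by
                rw [mul_one, ← pow_add]; congr 1; omega) hmem₀'
          exact IH (L + g'.natDegree + i) (by omega) L g' i le_rfl hLl hiL hmem'
            (Or.inr (lt_trans hdg' hklt))
      rw [hsplit]
      apply dvd_add hdvdg'
      exact ⟨Polynomial.C b * μ, by ring⟩
    · -- deg ν i > k : descend in i
      have hi1 : 1 ≤ i := by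
        by_contra h
        push_neg at h
        interval_cases i
        rw [hν0] at hd
        simp at hd
      have hstep : Polynomial.C (p ^ (L - (i - 1))) ∣ g := by
        apply IH (L + g.natDegree + (i - 1)) (by omega) L g (i - 1) le_rfl hLl (by omega) hmem
        right
        have : i - 1 + 1 = i := by omega
        rw [this]
        omega
      exact dvd_trans (map_dvd Polynomial.C (pow_dvd_pow p (by omega))) hstep

/-- Forward direction: membership in the null ideal gives the decomposition. -/
lemma fwd : ∀ (k : ℕ) (f : Polynomial D), f.natDegree ≤ k → memNullDvd A (p ^ ℓ) f →
    ∃ c : ℕ → Polynomial D,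
      f = ∑ i ∈ indexSet ν ℓ, Polynomial.C (p ^ (ℓ - i)) * ν i * c i := by
  intro k
  induction k using Nat.strong_induction_on with
  | _ k IH =>
    intro f hfk hmem
    rcases eq_or_ne f 0 with rfl | hfne
    · exact ⟨0, by simp⟩
    set n₀ := f.natDegree with hn₀
    set P : ℕ → Prop := fun j => (ν j).natDegree ≤ n₀ with hP
    have hP0 : P 0 := by rw [hP]; simp [hν0]
    set i := Nat.findGreatest P ℓ with hi
    have hiℓ : i ≤ ℓ := Nat.findGreatest_le ℓ
    have hPi : (ν i).natDegree ≤ n₀ := Nat.findGreatest_spec (Nat.zero_le ℓ) hP0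
    have hcond : i = ℓ ∨ n₀ < (ν (i + 1)).natDegree := by
      rcases eq_or_ne i ℓ with h | h
      · exact Or.inl h
      · right
        have := Nat.findGreatest_is_greatest (P := P) (n := ℓ) (k := i + 1)
          (by omega) (by omega)
        simp only [hP] at this
        omega
    have hdvd : Polynomial.C (p ^ (ℓ - i)) ∣ f :=
      keyS hp A hν0 hν (ℓ + f.natDegree + i) ℓ f i le_rfl le_rfl hiℓ hmem hcond
    have hdvdlead : p ^ (ℓ - i) ∣ f.coeff n₀ := (Polynomial.C_dvd_iff_dvd_coeff _ _).1 hdvd n₀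
    obtain ⟨b, hb⟩ := hdvdlead
    set d := (ν i).natDegree with hdd
    set μ : Polynomial D := Polynomial.X ^ (n₀ - d) * ν i with hμ
    have hνimonic : (ν i).Monic := (hν i hiℓ).1
    have hμmonic : μ.Monic := (Polynomial.monic_X_pow _).mul hνimonic
    have hμdeg : μ.natDegree = n₀ := by
      rw [hμ, (Polynomial.monic_X_pow _).natDegree_mul hνimonic, Polynomial.natDegree_X_pow]
      omega
    have hμmem : memNullDvd A (p ^ i) μ := mnd_mul_left A _ (hν i hiℓ).2.1
    set f' : Polynomial D := f - Polynomial.C (p ^ (ℓ - i) * b) * μ with hf'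
    have hmem' : memNullDvd A (p ^ ℓ) f' := by
      apply mnd_sub A hmem
      exact mnd_scale A
        (show (p ^ (ℓ - i) * b) * p ^ i = p ^ ℓ * b by
          rw [mul_comm (p ^ (ℓ - i)) b, mul_assoc, ← pow_add]
          rw [show ℓ - i + i = ℓ by omega]
          ring) hμmem
    have hcoeff' : f'.coeff n₀ = 0 := by
      rw [hf', Polynomial.coeff_sub, Polynomial.coeff_C_mul, hb,
        show μ.coeff n₀ = 1 by rw [← hμdeg]; exact hμmonic.coeff_natDegree, mul_one, sub_self]
    have hdeg' : f'.natDegree ≤ n₀ := by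
      apply le_trans (Polynomial.natDegree_sub_le _ _)
      exact max_le le_rfl (le_trans (Polynomial.natDegree_C_mul_le _ _) (le_of_eq hμdeg))
    -- decomposition of f'
    have hdecomp : ∃ c : ℕ → Polynomial D,
        f' = ∑ j ∈ indexSet ν ℓ, Polynomial.C (p ^ (ℓ - j)) * ν j * c j := by
      rcases eq_or_ne f' 0 with h0 | h0
      · exact ⟨0, by simp [h0]⟩
      · have hlt : f'.natDegree < n₀ := natDegree_lt_of_coeff_eq_zero h0 hdeg' hcoeff'
        have hk1 : f'.natDegree < k := lt_of_lt_of_le hlt hfk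
        exact IH f'.natDegree hk1 f' le_rfl hmem'
    obtain ⟨c₀, hc₀⟩ := hdecomp
    have hiI : i ∈ indexSet ν ℓ := by
      rcases eq_or_ne i ℓ with h' | h'
      · rw [h']; exact Finset.mem_insert_self _ _
      · have hlt : n₀ < (ν (i + 1)).natDegree := hcond.resolve_left h'
        apply Finset.mem_insert_of_mem
        rw [Finset.mem_filter, Finset.mem_range]
        exact ⟨by omega, by omega⟩
    set w : Polynomial D := Polynomial.C b * Polynomial.X ^ (n₀ - d) with hw
    refine ⟨Function.update c₀ i (c₀ i + w), ?_⟩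
    have hupdate : ∀ j, Function.update c₀ i (c₀ i + w) j
        = c₀ j + (if j = i then w else 0) := by
      intro j
      rcases eq_or_ne j i with rfl | hji
      · simp [Function.update]
      · simp [Function.update, hji]
    calc f = f' + Polynomial.C (p ^ (ℓ - i) * b) * μ := by rw [hf']; ring
    _ = (∑ j ∈ indexSet ν ℓ, Polynomial.C (p ^ (ℓ - j)) * ν j * c₀ j)
        + Polynomial.C (p ^ (ℓ - i)) * ν i * w := by
        rw [hc₀]
        congr 1
        rw [hw, hμ, Polynomial.C_mul]
        ring
    _ = ∑ j ∈ indexSet ν ℓ, Polynomial.C (p ^ (ℓ - j)) * ν j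
          * Function.update c₀ i (c₀ i + w) j := by
        have h1 : ∀ j ∈ indexSet ν ℓ,
            Polynomial.C (p ^ (ℓ - j)) * ν j * Function.update c₀ i (c₀ i + w) j
            = Polynomial.C (p ^ (ℓ - j)) * ν j * c₀ j
              + (if j = i then Polynomial.C (p ^ (ℓ - j)) * ν j * w else 0) := by
          intro j _
          rw [hupdate j, mul_add]
          congr 1
          split <;> simp
        rw [Finset.sum_congr rfl h1, Finset.sum_add_distrib,
          Finset.sum_ite_eq' (indexSet ν ℓ) i
            (fun j => Polynomial.C (p ^ (ℓ - j)) * ν j * w), if_pos hiI]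

end Main

/-- Let `p` be prime, `ℓ ≥ 0`, and `ν_i` `(p^i)`-minimal polynomials of `A`
for `0 ≤ i ≤ ℓ` (with `ν_0 = 1`). Then `N_{(p^ℓ)}(A) = Σ_{i ∈ I_A^ℓ} p^{ℓ-i}·ν_i·D[X]`,
where `I_A^ℓ` is the `ℓ`-th index set of `A` with respect to `p` (stated elementwise). -/
theorem stmt6 {D : Type*} [CommRing D] [IsDomain D] [IsPrincipalIdealRing D]
    (p : D) (hp : Prime p) (ℓ : ℕ)
    {n : ℕ} (A : Matrix (Fin n) (Fin n) D)
    (ν : ℕ → Polynomial D) (hν0 : ν 0 = 1)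
    (hν : ∀ i, i ≤ ℓ → IsMinPolyMod A (p ^ i) (ν i)) :
    ∀ f : Polynomial D, memNullDvd A (p ^ ℓ) f ↔
      ∃ c : ℕ → Polynomial D,
        f = ∑ i ∈ indexSet ν ℓ, Polynomial.C (p ^ (ℓ - i)) * ν i * c i := by
  intro f
  constructor
  · intro hmem
    exact fwd hp A hν0 hν f.natDegree f le_rfl hmem
  · rintro ⟨c, rfl⟩
    apply Finset.sum_induction _ (memNullDvd A (p ^ ℓ)) (fun a b => mnd_add A) (mnd_zero A _)
    intro i hiI
    have hiℓ : i ≤ ℓ := by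
      rcases Finset.mem_insert.1 hiI with h | h
      · omega
      · have := (Finset.mem_filter.1 h).1
        rw [Finset.mem_range] at this
        omega
    apply mnd_mul_right
    exact mnd_scale A
      (show p ^ (ℓ - i) * p ^ i = p ^ ℓ * 1 by
        rw [mul_one, ← pow_add, show ℓ - i + i = ℓ by omega]) (hν i hiℓ).2.1
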